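/- Let p be a prime with p ≡ 1 (mod 4), let L, M be integers with p = L² + 4M², and let q be an odd prime with q ≠ p that does not divide L·M. If there exists an integer m such that q divides M·(m⁴ − 6m² + 1) + 2L·(m³ − m), then q* is a biquadratic residue modulo p. -/

import Mathlib

open GaussianInt

/-- helper: order 4 from fourth power one and square not one -/
lemma orderOf_eq_four_aux {M : Type*} [Monoid M] {y : M} (h4 : y ^ 4 = 1) (h2 : y ^ 2 ≠ 1) :
    orderOf y = 4 := by
  have hd : orderOf y ∣ 4 := orderOf_dvd_of_pow_eq_one h4
  have hne1 : orderOf y ≠ 1 := by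
    intro h
    exact h2 (by rw [orderOf_eq_one_iff.mp h, one_pow])
  have hne2 : orderOf y ≠ 2 := by
    intro h
    exact h2 (h ▸ pow_orderOf_eq_one y)
  have hle : orderOf y ≤ 4 := Nat.le_of_dvd (by norm_num) hd
  interval_cases h : orderOf y <;> simp_all <;> omega

lemma sq_eq_one_or_neg_one_aux {R : Type*} [CommRing R] [IsDomain R] {x : R} (h : x ^ 4 = 1) :
    x ^ 2 = 1 ∨ x ^ 2 = -1 := by
  have h' : (x ^ 2 - 1) * (x ^ 2 + 1) = 0 := by linear_combination h
  rcases mul_eq_zero.mp h' with h'' | h''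
  · left; linear_combination h''
  · right; linear_combination h''

lemma two_sq_unique_aux {p a b L M : ℤ} (hp : Prime p) (hppos : 0 < p)
    (hab : a ^ 2 + b ^ 2 = p) (hLM : L ^ 2 + 4 * M ^ 2 = p) (ha : Odd a) :
    a ^ 2 = L ^ 2 ∧ b ^ 2 = 4 * M ^ 2 := by
  have hdvd : p ∣ (2 * a * M - b * L) * (2 * a * M + b * L) :=
    ⟨4 * M ^ 2 - b ^ 2, by linear_combination 4 * M ^ 2 * hab - b ^ 2 * hLM⟩
  have key : ∀ s : ℤ, s ^ 2 = 1 → p ∣ (2 * a * M + s * (b * L)) → a ^ 2 = L ^ 2 := by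
    intro s hs2 hpd
    obtain ⟨k, hk⟩ := hpd
    have hBrah : (p * k) ^ 2 + (a * L - s * (2 * b * M)) ^ 2 = p ^ 2 := by
      rw [← hk]
      linear_combination (L ^ 2 + 4 * M ^ 2) * hab + p * hLM + b ^ 2 * (L ^ 2 + 4 * M ^ 2) * hs2
    rcases eq_or_ne k 0 with hk0 | hk0
    · subst hk0
      refine mul_right_cancel₀ hppos.ne' ?_
      linear_combination (-(a ^ 2)) * hLM + L ^ 2 * hab + (b ^ 2 * L ^ 2) * hs2 +
        (2 * a * M - s * (b * L)) * hk
    · exfalso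
      have hk2 : 1 ≤ k ^ 2 := by
        have : k ≤ -1 ∨ 1 ≤ k := by omega
        rcases this with h | h <;> nlinarith
      have hsq : (a * L - s * (2 * b * M)) ^ 2 ≤ 0 := by nlinarith [sq_nonneg p]
      have hzero : a * L - s * (2 * b * M) = 0 := by
        have := sq_nonneg (a * L - s * (2 * b * M))
        have h0 : (a * L - s * (2 * b * M)) ^ 2 = 0 := le_antisymm hsq this
        exact pow_eq_zero_iff two_ne_zero |>.mp h0
      have ha2 : a ^ 2 = 4 * M ^ 2 := by
        refine mul_right_cancel₀ hppos.ne' ?_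
        linear_combination (-(a ^ 2)) * hLM + (4 * M ^ 2) * hab + (4 * b ^ 2 * M ^ 2) * hs2 +
          (a * L + s * (2 * b * M)) * hzero
      have hodd : Odd (a ^ 2) := ha.pow
      have heven : Even (a ^ 2) := ⟨2 * M ^ 2, by linarith⟩
      exact (Int.not_odd_iff_even.mpr heven) hodd
  have hsplit := hp.dvd_mul.mp hdvd
  have haL : a ^ 2 = L ^ 2 := by
    rcases hsplit with h | h
    · exact key (-1) (by norm_num) (by obtain ⟨k, hk⟩ := h; exact ⟨k, by linear_combination hk⟩)
    · exact key 1 (by norm_num) (by obtain ⟨k, hk⟩ := h; exact ⟨k, by linear_combination hk⟩)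
  exact ⟨haL, by linarith⟩

section Key
variable {F : Type*} [Field F]

lemma key_one {P1 P2 a1 b1 c pF : F} (K : ℕ)
    (h1 : P1 * a1 ^ 4 = c) (h2 : P2 * b1 ^ 4 = c) (hP : P1 * P2 = pF)
    (ha : a1 ^ (4 * K) = 1) (hb : b1 ^ (4 * K) = 1) (hc : c ^ (4 * K) = 1) :
    (pF * P1 ^ 2) ^ K = 1 := by
  have main : (pF * P1 ^ 2) ^ K * ((a1 ^ (4 * K)) ^ 3 * b1 ^ (4 * K)) =
      ((P1 * a1 ^ 4) ^ 3 * (P2 * b1 ^ 4)) ^ K := by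
    rw [← hP]; ring
  rw [ha, hb, h1, h2, one_pow, mul_one, mul_one] at main
  rw [main]
  calc (c ^ 3 * c) ^ K = c ^ (4 * K) := by rw [show c ^ 3 * c = c ^ 4 by ring, ← pow_mul]
  _ = 1 := hc

lemma key_three {P1 P2 a1 b1 c pF n : F} (K : ℕ)
    (h1 : P1 * a1 ^ 4 = c) (h2 : P2 * b1 ^ 4 = c) (hP : P1 * P2 = pF)
    (hab : a1 * b1 = n) (hn : n ≠ 0)
    (ha : a1 ^ (4 * K) = n) (hb : b1 ^ (4 * K) = n) (hc : c ^ (4 * K) = c ^ 2) :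
    (pF * P1 ^ 2) ^ K = pF := by
  have hc2 : c ^ 2 = pF * n ^ 4 := by
    linear_combination (-c) * h1 + (-(P1 * a1 ^ 4)) * h2 + n ^ 4 * hP +
      P1 * P2 * ((a1 * b1) ^ 3 + (a1 * b1) ^ 2 * n + (a1 * b1) * n ^ 2 + n ^ 3) * hab
  have main : (pF * P1 ^ 2) ^ K * ((a1 ^ (4 * K)) ^ 3 * b1 ^ (4 * K)) =
      ((P1 * a1 ^ 4) ^ 3 * (P2 * b1 ^ 4)) ^ K := by
    rw [← hP]; ring
  rw [ha, hb, h1, h2] at main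
  have hr : (c ^ 3 * c) ^ K = pF * n ^ 4 := by
    rw [show c ^ 3 * c = c ^ 4 by ring, ← pow_mul, hc, hc2]
  rw [hr] at main
  have hn4 : (n : F) ^ 3 * n ≠ 0 := by simp [hn]
  exact mul_right_cancel₀ hn4 (by rw [main]; ring)

end Key

set_option maxHeartbeats 1600000 in
set_option synthInstance.maxHeartbeats 400000 in
/-- If p ≡ 1 (mod 4) is prime, p = L² + 4M², and q ≠ p is an odd prime not dividing LM
such that q ∣ M(m⁴ - 6m² + 1) + 2L(m³ - m) for some integer m, then
q* = (-1)^((q-1)/2)·q is a biquadratic residue modulo p. -/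
theorem biquadratic_residue_of_dvd_value (p : ℕ) (hp : p.Prime) (hp4 : p % 4 = 1)
    (L M : ℤ) (hLM : (p : ℤ) = L ^ 2 + 4 * M ^ 2)
    (q : ℕ) (hq : q.Prime) (hq2 : Odd q) (hqp : q ≠ p) (hndvd : ¬ (q : ℤ) ∣ L * M)
    (hm : ∃ m : ℤ, (q : ℤ) ∣ M * (m ^ 4 - 6 * m ^ 2 + 1) + 2 * L * (m ^ 3 - m)) :
    ∃ x : ℤ, x ^ 4 ≡ (-1) ^ ((q - 1) / 2) * (q : ℤ) [ZMOD (p : ℤ)] := by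
  classical
  obtain ⟨m, hmdvd⟩ := hm
  haveI hpf : Fact p.Prime := ⟨hp⟩
  haveI hqf : Fact q.Prime := ⟨hq⟩
  have hq2' : q ≠ 2 := by
    rintro rfl
    exact (Nat.not_odd_iff_even.mpr even_two) hq2
  have hq3 : 3 ≤ q := by have := hq.two_le; omega
  have hp5 : 5 ≤ p := by have := hp.two_le; omega
  have hqdp : ¬ (q ∣ p) := fun h => hqp ((Nat.prime_dvd_prime_iff_eq hq hp).mp h)
  have hqz : Prime (q : ℤ) := Nat.prime_iff_prime_int.mp hq
  have hq4 : ¬ ((q : ℤ) ∣ 4) := by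
    intro h
    have h' : q ∣ 4 := by exact_mod_cast h
    have hle : q ≤ 4 := Nat.le_of_dvd (by norm_num) h'
    interval_cases q
    · omega
    · exact absurd hq (by norm_num)
  -- q does not divide m² + 1
  have hqm2 : ¬ ((q : ℤ) ∣ m ^ 2 + 1) := by
    intro hdvd
    have h4 : (q : ℤ) ∣ 4 * (2 * M - L * m) := by
      have : 4 * (2 * M - L * m) =
          (M * (m ^ 4 - 6 * m ^ 2 + 1) + 2 * L * (m ^ 3 - m))
          - (M * (m ^ 2 - 7) + 2 * L * m) * (m ^ 2 + 1) := by ring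
      rw [this]
      exact dvd_sub hmdvd (Dvd.dvd.mul_left hdvd _)
    have h2ML : (q : ℤ) ∣ 2 * M - L * m := (hqz.dvd_mul.mp h4).resolve_left hq4
    have hqpz : (q : ℤ) ∣ (p : ℤ) := by
      have : (p : ℤ) = L ^ 2 * (m ^ 2 + 1) + (2 * M - L * m) * (2 * M + L * m) := by
        rw [hLM]; ring
      rw [this]
      exact dvd_add (Dvd.dvd.mul_left hdvd _) (h2ML.mul_right _)
    exact hqdp (by exact_mod_cast hqpz)
  -- the integer c (the "real part")
  set cInt : ℤ := L * (m ^ 4 - 6 * m ^ 2 + 1) - 8 * M * (m ^ 3 - m) with hcdef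
  have hqc : ¬ ((q : ℤ) ∣ cInt) := by
    intro hdvd
    have hiden : (p : ℤ) * (m ^ 2 + 1) ^ 4 =
        cInt ^ 2 + 4 * (M * (m ^ 4 - 6 * m ^ 2 + 1) + 2 * L * (m ^ 3 - m)) ^ 2 := by
      rw [hcdef, hLM]; ring
    have hdd : (q : ℤ) ∣ (p : ℤ) * (m ^ 2 + 1) ^ 4 := by
      rw [hiden]
      exact dvd_add (dvd_pow hdvd two_ne_zero) ((dvd_pow hmdvd two_ne_zero).mul_left 4)
    rcases hqz.dvd_mul.mp hdd with h | h
    · exact hqdp (by exact_mod_cast h)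
    · exact hqm2 (hqz.dvd_of_dvd_pow h)
  -- *** the quartic character with values in ℤ[i] ***
  obtain ⟨g₀, hg₀⟩ := IsCyclic.exists_generator (α := (ZMod p)ˣ)
  have hcardu : Fintype.card (ZMod p)ˣ = p - 1 := by
    rw [Fintype.card_units, ZMod.card]
  have hp14 : 4 ∣ p - 1 := by omega
  set i₀ : GaussianInt := ⟨0, 1⟩ with hi₀def
  have hi2 : i₀ ^ 2 = -1 := by
    rw [sq, hi₀def]
    ext <;> simp [Zsqrtd.re_mul, Zsqrtd.im_mul]
  have hi4 : i₀ ^ 4 = 1 := by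
    rw [show (4 : ℕ) = 2 * 2 from rfl, pow_mul, hi2]; norm_num
  set zu : GaussianIntˣ := Units.mkOfMulEqOne i₀ (-i₀) (by rw [mul_neg, ← sq, hi2, neg_neg])
    with hzu
  have hzuval : (zu : GaussianInt) = i₀ := rfl
  have hzumem : zu ∈ rootsOfUnity (Fintype.card (ZMod p)ˣ) GaussianInt := by
    rw [mem_rootsOfUnity, Units.ext_iff]
    rw [Units.val_pow_eq_pow_val, hzuval, Units.val_one, hcardu]
    obtain ⟨t, ht⟩ := hp14
    rw [ht, pow_mul, hi4, one_pow]
  set χ : MulChar (ZMod p) GaussianInt := MulChar.ofRootOfUnity hzumem hg₀ with hχdef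
  have hχg₀ : χ ↑g₀ = i₀ := by
    have h := MulChar.ofRootOfUnity_spec hzumem hg₀
    rw [hχdef, h, hzuval]
  have hχ4 : χ ^ 4 = 1 := by
    rw [MulChar.eq_iff hg₀, MulChar.pow_apply_coe, hχg₀, hi4, MulChar.one_apply_coe]
  have hχvals4 : ∀ x : (ZMod p)ˣ, (χ ↑x) ^ 4 = 1 := by
    intro x
    rw [← MulChar.pow_apply_coe, hχ4, MulChar.one_apply_coe]
  have hχsq : ∀ x : (ZMod p)ˣ, (χ ↑x) ^ 2 = 1 ∨ (χ ↑x) ^ 2 = -1 :=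
    fun x => sq_eq_one_or_neg_one_aux (hχvals4 x)
  have hχg₀2 : (χ ↑g₀) ^ 2 = -1 := by rw [hχg₀, hi2]
  have hχne : χ ≠ 1 := by
    intro h
    have := (MulChar.eq_iff hg₀ χ 1).mp h
    rw [hχg₀, MulChar.one_apply_coe] at this
    exact absurd this (by decide)
  have hχ2ne : χ ^ 2 ≠ 1 := by
    intro h
    have := (MulChar.eq_iff hg₀ (χ ^ 2) 1).mp h
    rw [MulChar.pow_apply_coe, hχg₀, hi2, MulChar.one_apply_coe] at this
    exact absurd this (by decide)
  -- *** the Jacobi sum and its norm (via ℂ) ***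
  set J : GaussianInt := jacobiSum χ χ with hJdef
  have hringchar : ringChar ℂ ≠ ringChar (ZMod p) := by
    rw [ringChar.eq_zero, ZMod.ringChar_zmod_n]
    exact fun h => hp.ne_zero h.symm
  set χC : MulChar (ZMod p) ℂ := χ.ringHomComp toComplex with hχCdef
  have hχCne : χC ≠ 1 := (MulChar.ringHomComp_ne_one_iff toComplex_injective).mpr hχne
  have hχCmul : χC * χC ≠ 1 := by
    rw [hχCdef, ← MulChar.ringHomComp_mul]
    exact (MulChar.ringHomComp_ne_one_iff toComplex_injective).mpr (by rwa [← sq])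
  have hJJ := jacobiSum_mul_jacobiSum_inv hringchar hχCne hχCne hχCmul
  have hconj : jacobiSum χC⁻¹ χC⁻¹ = starRingEnd ℂ (jacobiSum χC χC) := by
    simp only [jacobiSum, map_sum, map_mul]
    refine Finset.sum_congr rfl fun x _ => ?_
    rw [← MulChar.star_apply' χC x, ← MulChar.star_apply' χC (1 - x), starRingEnd_apply,
      starRingEnd_apply]
  have hJC : toComplex J * starRingEnd ℂ (toComplex J) = (p : ℂ) := by
    have h := hJJ
    rw [hconj] at h
    rw [hχCdef, jacobiSum_ringHomComp, ZMod.card] at h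
    exact_mod_cast h
  have hnormJ : (J.re) ^ 2 + (J.im) ^ 2 = (p : ℤ) := by
    have h1 : ((Zsqrtd.norm J : ℤ) : ℂ) = (p : ℂ) := by
      calc ((Zsqrtd.norm J : ℤ) : ℂ) = toComplex ((Zsqrtd.norm J : ℤ) : GaussianInt) := by
            rw [map_intCast]
      _ = toComplex (J * star J) := by rw [Zsqrtd.norm_eq_mul_conj]
      _ = toComplex J * starRingEnd ℂ (toComplex J) := by rw [map_mul, toComplex_star,
            starRingEnd_apply]
      _ = (p : ℂ) := hJC
    have h2 : Zsqrtd.norm J = (p : ℤ) := by exact_mod_cast h1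
    rw [← h2, Zsqrtd.norm_def]; ring
  -- *** parity: J.re is odd ***
  have hp2ne : (2 : ZMod p) ≠ 0 := by
    have h : ((2 : ℕ) : ZMod p) ≠ 0 := by
      rw [Ne, ZMod.natCast_eq_zero_iff]
      intro h
      have := Nat.le_of_dvd two_pos h
      omega
    simpa using h
  set c₂ : ZMod p := (2 : ZMod p)⁻¹ with hc₂def
  have hc₂ne : c₂ ≠ 0 := inv_ne_zero hp2ne
  have h2c₂ : (2 : ZMod p) * c₂ = 1 := mul_inv_cancel₀ hp2ne
  have h1c : (1 : ZMod p) - c₂ = c₂ := by linear_combination -h2c₂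
  have hchar : ∀ a : ZMod p, 1 - a = a → a = c₂ := by
    intro a ha
    have h2a : a * (2 : ZMod p) = 1 := by linear_combination -ha
    rw [hc₂def]
    exact eq_inv_of_mul_eq_one_left h2a
  have hdvd2 : (2 : GaussianInt) ∣ ∑ x ∈ Finset.univ.erase c₂, χ x * χ (1 - x) := by
    have hmk : ∀ z : GaussianInt,
        Ideal.Quotient.mk (Ideal.span {(2 : GaussianInt)}) z = 0 ↔ (2 : GaussianInt) ∣ z := by
      intro z
      rw [Ideal.Quotient.eq_zero_iff_mem, Ideal.mem_span_singleton]
    rw [← hmk, map_sum]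
    refine Finset.sum_involution (fun x _ => 1 - x) ?_ ?_ ?_ ?_
    · intro a _
      rw [sub_sub_cancel, ← map_add,
        show χ a * χ (1 - a) + χ (1 - a) * χ a = 2 * (χ a * χ (1 - a)) by ring, map_mul,
        (hmk 2).mpr dvd_rfl, zero_mul]
    · intro a ha _
      intro heq
      exact (Finset.mem_erase.mp ha).1 (hchar a heq)
    · intro a ha
      rw [Finset.mem_erase] at ha ⊢
      refine ⟨fun h => ha.1 ?_, Finset.mem_univ _⟩
      have ha' : a = 1 - c₂ := by linear_combination -h
      rw [ha', h1c]
    · intro a _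
      show 1 - (1 - a) = a
      rw [sub_sub_cancel]
  obtain ⟨z, hz⟩ := hdvd2
  have hJsplit : J = χ c₂ * χ (1 - c₂) + 2 * z := by
    rw [hJdef]
    show ∑ x : ZMod p, χ x * χ (1 - x) = _
    rw [← hz]
    exact (Finset.add_sum_erase _ _ (Finset.mem_univ c₂)).symm
  have hwsq : (χ c₂) ^ 2 = 1 ∨ (χ c₂) ^ 2 = -1 := by
    have hu : IsUnit c₂ := isUnit_iff_ne_zero.mpr hc₂ne
    have h := hχsq hu.unit
    rwa [IsUnit.unit_spec] at h
  have hJw : J = (χ c₂) ^ 2 + 2 * z := by rw [hJsplit, h1c, sq]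
  have hJre : Odd J.re := by
    have hre2z : (2 * z : GaussianInt).re = 2 * z.re := by
      rw [two_mul, Zsqrtd.re_add]; ring
    rcases hwsq with h | h
    · refine ⟨z.re, ?_⟩
      rw [hJw, h, Zsqrtd.re_add, hre2z, Zsqrtd.re_one]; ring
    · refine ⟨z.re - 1, ?_⟩
      rw [hJw, h, Zsqrtd.re_add, hre2z, Zsqrtd.re_neg, Zsqrtd.re_one]; ring
  -- *** J = ±(L + 2Mi) or ±(L - 2Mi) ***
  obtain ⟨haL2, hbM2⟩ := two_sq_unique_aux (Nat.prime_iff_prime_int.mp hp)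
    (by exact_mod_cast hp.pos) hnormJ hLM.symm hJre
  have haL : J.re = L ∨ J.re = -L := by
    have h0 : (J.re - L) * (J.re + L) = 0 := by linear_combination haL2
    rcases mul_eq_zero.mp h0 with h | h
    · exact Or.inl (by linarith)
    · exact Or.inr (by linarith)
  have hbM : J.im = 2 * M ∨ J.im = -(2 * M) := by
    have h0 : (J.im - 2 * M) * (J.im + 2 * M) = 0 := by linear_combination hbM2
    rcases mul_eq_zero.mp h0 with h | h
    · exact Or.inl (by linarith)
    · exact Or.inr (by linarith)
  -- *** the field F of characteristic q ***
  haveI : NeZero p := ⟨hp.ne_zero⟩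
  set F := AlgebraicClosure (ZMod q) with hFdef
  have hqF : (q : F) = 0 := CharP.cast_eq_zero F q
  have hpF0 : ((p : ℕ) : F) ≠ 0 := by
    intro h
    exact hqdp ((CharP.cast_eq_zero_iff F q p).mp h)
  haveI : NeZero ((p : ℕ) : F) := ⟨hpF0⟩
  obtain ⟨ζ, hζ⟩ := HasEnoughRootsOfUnity.exists_primitiveRoot F p
  set ψ : AddChar (ZMod p) F := AddChar.zmodChar p hζ.pow_eq_one with hψdef
  have hψprim : ψ.IsPrimitive := AddChar.zmodChar_primitive_of_primitive_root p hζ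
  obtain ⟨iF, hiFsq⟩ := IsAlgClosed.exists_pow_nat_eq (-1 : F) (n := 2) (by norm_num)
  have hiF2 : iF * iF = ((-1 : ℤ) : F) := by rw [← sq, hiFsq]; push_cast; ring
  set φF : GaussianInt →+* F := Zsqrtd.lift ⟨iF, hiF2⟩ with hφFdef
  set χF : MulChar (ZMod p) F := χ.ringHomComp φF with hχFdef
  have hχFapp : ∀ x : ZMod p, χF x = φF (χ x) := fun x => rfl
  have hχFg₀ : χF ↑g₀ = iF := by
    rw [hχFapp, hχg₀, hφFdef, Zsqrtd.lift_apply_apply]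
    show ((0 : ℤ) : F) + ((1 : ℤ) : F) * iF = iF
    push_cast; ring
  have hm1F : (-1 : F) ≠ 1 := by
    intro h
    have h2 : ((2 : ℤ) : F) = 0 := by push_cast; linear_combination -h
    have h3 := (CharP.intCast_eq_zero_iff F q 2).mp h2
    have h4 : q ∣ 2 := by exact_mod_cast h3
    have := Nat.le_of_dvd two_pos h4
    omega
  have hiF4 : iF ^ 4 = 1 := by
    rw [show (4 : ℕ) = 2 * 2 from rfl, pow_mul, hiFsq]; ring
  have hiFne1 : iF ^ 2 ≠ 1 := by rw [hiFsq]; exact hm1F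
  have hiFne : iF ≠ 1 := fun h => hiFne1 (by rw [h, one_pow])
  have hχFne : χF ≠ 1 := by
    rw [MulChar.ne_one_iff]
    exact ⟨g₀, by rw [hχFg₀]; exact hiFne⟩
  have hχF2ne : χF ^ 2 ≠ 1 := by
    intro h
    have h2 : (χF ^ 2) ↑g₀ = -1 := by rw [MulChar.pow_apply_coe, hχFg₀, hiFsq]
    rw [h, MulChar.one_apply_coe] at h2
    exact hm1F h2.symm
  have hχF4 : χF ^ 4 = 1 := by
    rw [hχFdef, MulChar.ringHomComp_pow, hχ4, MulChar.ringHomComp_one]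
  have hordχF : orderOf χF = 4 := orderOf_eq_four_aux hχF4 hχF2ne
  -- Gauss sums over F
  set g : F := gaussSum χF ψ with hgdef
  have hcardF : ((Fintype.card (ZMod p) : F)) ≠ 0 := by rw [ZMod.card]; exact hpF0
  have hgne : g ≠ 0 := gaussSum_ne_zero_of_nontrivial hcardF hχFne hψprim
  have hχFmulne : χF * χF ≠ 1 := by rwa [← sq]
  set JF : F := jacobiSum χF χF with hJFdef
  have hJF : JF = φF J := by rw [hJFdef, hχFdef, hJdef, jacobiSum_ringHomComp]
  have hgg : gaussSum (χF * χF) ψ * JF = g * g := jacobiSum_mul_nontrivial hχFmulne ψ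
  have hquad : (χF * χF).IsQuadratic := by
    intro x
    by_cases hx : IsUnit x
    · have h := hχsq hx.unit
      rw [IsUnit.unit_spec] at h
      rw [MulChar.mul_apply, hχFapp]
      rcases h with h | h
      · right; left
        rw [← map_mul, ← sq, h, map_one]
      · right; right
        rw [← map_mul, ← sq, h, map_neg, map_one]
    · left
      rw [MulChar.mul_apply, MulChar.map_nonunit _ hx, mul_zero]
  have hg2sq : gaussSum (χF * χF) ψ ^ 2 = (p : F) := by
    have h := gaussSum_sq hχFmulne hquad hψprim
    have hm : (χF * χF) (-1) = 1 := by
      rw [MulChar.mul_apply, ← map_mul, neg_mul_neg, one_mul, MulChar.map_one]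
    rw [hm, one_mul, ZMod.card] at h
    exact h
  have hg4 : g ^ 4 = (p : F) * JF ^ 2 := by
    have h : g ^ 4 = (gaussSum (χF * χF) ψ * JF) ^ 2 := by rw [hgg]; ring
    rw [h, mul_pow, hg2sq]
  -- Frobenius
  have hfrob : g ^ q = gaussSum (χF ^ q) (ψ ^ q) := gaussSum_frob q χF ψ
  have hψq : (ψ ^ q) = ψ.mulShift (q : ZMod p) := AddChar.pow_mulShift ψ q
  have hχFq : χF ^ q = χF ^ (q % 4) := by
    calc χF ^ q = χF ^ (4 * (q / 4) + q % 4) := by rw [Nat.div_add_mod]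
    _ = χF ^ (q % 4) := by rw [pow_add, pow_mul, hχF4, one_pow, one_mul]
  have hqzp : ((q : ZMod p)) ≠ 0 := by
    rw [Ne, ZMod.natCast_eq_zero_iff]
    intro h
    exact hqp ((Nat.prime_dvd_prime_iff_eq hp hq).mp h).symm
  have hquIsUnit : IsUnit ((q : ZMod p)) := isUnit_iff_ne_zero.mpr hqzp
  set qu : (ZMod p)ˣ := hquIsUnit.unit with hqu
  have hquval : (qu : ZMod p) = (q : ZMod p) := IsUnit.unit_spec _
  -- the basic algebraic identities in F
  have hcondF' : (M : F) * ((m : F) ^ 4 - 6 * (m : F) ^ 2 + 1)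
      + 2 * (L : F) * ((m : F) ^ 3 - (m : F)) = 0 := by
    obtain ⟨u, hu⟩ := hmdvd
    have h := congrArg (fun t : ℤ => (t : F)) hu
    push_cast at h
    rw [h, hqF, zero_mul]
  have he2 : ((m : F) + iF) ^ 4 = ((m : F) ^ 4 - 6 * (m : F) ^ 2 + 1)
      + (4 * ((m : F) ^ 3 - (m : F))) * iF := by
    linear_combination (6 * (m : F) ^ 2 + iF ^ 2 - 1 + 4 * (m : F) * iF) * hiFsq
  have he2' : ((m : F) - iF) ^ 4 = ((m : F) ^ 4 - 6 * (m : F) ^ 2 + 1)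
      - (4 * ((m : F) ^ 3 - (m : F))) * iF := by
    linear_combination (6 * (m : F) ^ 2 + iF ^ 2 - 1 - 4 * (m : F) * iF) * hiFsq
  have hcF' : (cInt : F) = (L : F) * ((m : F) ^ 4 - 6 * (m : F) ^ 2 + 1)
      - 8 * (M : F) * ((m : F) ^ 3 - (m : F)) := by
    rw [hcdef]; push_cast; ring
  have h1 : ((L : F) + 2 * (M : F) * iF) * ((m : F) + iF) ^ 4 = (cInt : F) := by
    rw [he2, hcF']
    linear_combination (2 * iF) * hcondF' + (8 * (M : F) * ((m : F) ^ 3 - (m : F))) * hiFsq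
  have h2 : ((L : F) - 2 * (M : F) * iF) * ((m : F) - iF) ^ 4 = (cInt : F) := by
    rw [he2', hcF']
    linear_combination (-(2 * iF)) * hcondF' + (8 * (M : F) * ((m : F) ^ 3 - (m : F))) * hiFsq
  have hPP : ((L : F) + 2 * (M : F) * iF) * ((L : F) - 2 * (M : F) * iF) = (p : F) := by
    have h := congrArg (fun t : ℤ => (t : F)) hLM
    push_cast at h
    linear_combination (-(4 * (M : F) ^ 2)) * hiFsq + (-1 : F) * h
  have hJFP : JF ^ 2 = ((L : F) + 2 * (M : F) * iF) ^ 2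
      ∨ JF ^ 2 = ((L : F) - 2 * (M : F) * iF) ^ 2 := by
    have hJFval : JF = (J.re : F) + (J.im : F) * iF := by
      rw [hJF, hφFdef, Zsqrtd.lift_apply_apply]
    rcases haL with h | h <;> rcases hbM with h' | h'
    · left; rw [hJFval, h, h']; push_cast; ring
    · right; rw [hJFval, h, h']; push_cast; ring
    · right; rw [hJFval, h, h']; push_cast; ring
    · left; rw [hJFval, h, h']; push_cast; ring
  -- Frobenius fixes rational elements
  have hmq : (m : F) ^ q = (m : F) := by
    have h1' : algebraMap (ZMod q) F ((m : ZMod q)) = (m : F) := map_intCast _ m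
    rw [← h1', ← map_pow, ZMod.pow_card]
  have hcq : (cInt : F) ^ q = (cInt : F) := by
    have h1' : algebraMap (ZMod q) F ((cInt : ZMod q)) = (cInt : F) := map_intCast _ cInt
    rw [← h1', ← map_pow, ZMod.pow_card]
  have hcne : (cInt : F) ≠ 0 := by
    rw [Ne, CharP.intCast_eq_zero_iff F q]
    exact hqc
  have hnne : ((m : F) ^ 2 + 1) ≠ 0 := by
    have h : ((m ^ 2 + 1 : ℤ) : F) ≠ 0 := by
      rw [Ne, CharP.intCast_eq_zero_iff F q]
      exact hqm2
    push_cast at h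
    exact h
  have hprodmi : ((m : F) + iF) * ((m : F) - iF) = (m : F) ^ 2 + 1 := by
    linear_combination (-1 : F) * hiFsq
  have hane : (m : F) + iF ≠ 0 := by
    intro h
    apply hnne
    rw [← hprodmi, h, zero_mul]
  have hbne : (m : F) - iF ≠ 0 := by
    intro h
    apply hnne
    rw [← hprodmi, h, mul_zero]
  -- the shared extraction of a fourth root
  have hiFord : orderOf iF = 4 := orderOf_eq_four_aux hiF4 hiFne1
  have extract : ∀ v : ZMod p, IsUnit v → χF v = 1 → ∃ x0 : ZMod p, x0 ^ 4 = v := by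
    intro v hv hχv
    obtain ⟨n, hn⟩ := (mem_powers_iff_mem_zpowers).mpr (hg₀ hv.unit)
    have hn' : g₀ ^ n = hv.unit := by simpa using hn
    have hval : χF v = iF ^ n := by
      rw [← hv.unit_spec, ← hn', Units.val_pow_eq_pow_val, map_pow, hχFg₀]
    have h4n : 4 ∣ n := by
      rw [← hiFord]
      exact orderOf_dvd_of_pow_eq_one (by rw [← hval, hχv])
    obtain ⟨k, hk⟩ := h4n
    refine ⟨↑(g₀ ^ k), ?_⟩
    rw [← Units.val_pow_eq_pow_val, ← pow_mul, show k * 4 = n by omega, hn', hv.unit_spec]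
  have final : ∀ v : ZMod p, IsUnit v → χF v = 1 →
      ((((-1 : ℤ) ^ ((q - 1) / 2) * (q : ℤ) : ℤ) : ZMod p) = v) →
      ∃ x : ℤ, x ^ 4 ≡ (-1) ^ ((q - 1) / 2) * (q : ℤ) [ZMOD (p : ℤ)] := by
    intro v hv hχv hveq
    obtain ⟨x0, hx0⟩ := extract v hv hχv
    refine ⟨(x0.val : ℤ), (ZMod.intCast_eq_intCast_iff _ _ _).mp ?_⟩
    have hL' : (((x0.val : ℤ) ^ 4 : ℤ) : ZMod p) = x0 ^ 4 := by
      push_cast [ZMod.natCast_val, ZMod.cast_id]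
      try rfl
    rw [hL', hx0, ← hveq]
  -- case distinction on q mod 4
  have hq14cases : q % 4 = 1 ∨ q % 4 = 3 := by
    have h2 := Nat.odd_iff.mp hq2
    omega
  rcases hq14cases with hr | hr
  · -- *** case q ≡ 1 (mod 4) ***
    obtain ⟨K, hK⟩ : ∃ K, q - 1 = 4 * K := ⟨(q - 1) / 4, by omega⟩
    have hiq : iF ^ q = iF := by
      calc iF ^ q = iF ^ (4 * (q / 4) + q % 4) := by rw [Nat.div_add_mod]
      _ = iF := by rw [pow_add, pow_mul, hiF4, one_pow, hr, pow_one, one_mul]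
    have powq_eq_one : ∀ x : F, x ^ q = x → x ≠ 0 → x ^ (4 * K) = 1 := by
      intro x hx hx0
      rw [← hK]
      have h : x ^ (q - 1) * x = 1 * x := by
        rw [← pow_succ, show q - 1 + 1 = q by omega, hx, one_mul]
      exact mul_right_cancel₀ hx0 h
    have haq : ((m : F) + iF) ^ q = (m : F) + iF := by rw [add_pow_char, hmq, hiq]
    have hbq : ((m : F) - iF) ^ q = (m : F) - iF := by
      rw [sub_eq_add_neg, add_pow_char, hmq, Odd.neg_pow hq2, hiq, ← sub_eq_add_neg]
    have ha1 := powq_eq_one _ haq hane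
    have hb1 := powq_eq_one _ hbq hbne
    have hcK := powq_eq_one _ hcq hcne
    have hpj : ((p : F) * JF ^ 2) ^ K = 1 := by
      rcases hJFP with h | h
      · rw [h]; exact key_one K h1 h2 hPP ha1 hb1 hcK
      · rw [h]; exact key_one K h2 h1 (by rw [← hPP]; ring) hb1 ha1 hcK
    have hgq : g ^ q = gaussSum χF (ψ.mulShift (q : ZMod p)) := by
      rw [hfrob, hψq, hχFq, hr]
      try rw [pow_one]
    have hkey : χF (q : ZMod p) * g ^ q = g := by
      rw [hgq, ← hquval]
      exact gaussSum_mulShift χF ψ qu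
    have hχFq1 : χF (q : ZMod p) = 1 := by
      have h : χF (q : ZMod p) * g ^ (q - 1) * g = g := by
        rw [mul_assoc, ← pow_succ, show q - 1 + 1 = q by omega]
        exact hkey
      have h2 : χF (q : ZMod p) * g ^ (q - 1) = 1 :=
        mul_right_cancel₀ hgne (h.trans (one_mul g).symm)
      rwa [hK, pow_mul, hg4, hpj, mul_one] at h2
    have heven : Even ((q - 1) / 2) := by
      rw [Nat.even_iff]; omega
    have hveq : (((-1 : ℤ) ^ ((q - 1) / 2) * (q : ℤ) : ℤ) : ZMod p) = (q : ZMod p) := by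
      rw [Even.neg_one_pow heven, one_mul]
      push_cast; ring
    exact final _ hquIsUnit hχFq1 hveq
  · -- *** case q ≡ 3 (mod 4) ***
    obtain ⟨K, hK⟩ : ∃ K, q + 1 = 4 * K := ⟨(q + 1) / 4, by omega⟩
    have hiq : iF ^ q = -iF := by
      calc iF ^ q = iF ^ (4 * (q / 4) + q % 4) := by rw [Nat.div_add_mod]
      _ = -iF := by rw [pow_add, pow_mul, hiF4, one_pow, hr, pow_succ, hiFsq, neg_one_mul, one_mul]
    have haq : ((m : F) + iF) ^ q = (m : F) - iF := by
      rw [add_pow_char, hmq, hiq, ← sub_eq_add_neg]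
    have hbq : ((m : F) - iF) ^ q = (m : F) + iF := by
      rw [sub_eq_add_neg, add_pow_char, hmq, Odd.neg_pow hq2, hiq, neg_neg]
    have ha1 : ((m : F) + iF) ^ (4 * K) = (m : F) ^ 2 + 1 := by
      rw [← hK, pow_succ, haq, ← hprodmi]; try ring
    have hb1 : ((m : F) - iF) ^ (4 * K) = (m : F) ^ 2 + 1 := by
      rw [← hK, pow_succ, hbq, ← hprodmi]; try ring
    have hcK : (cInt : F) ^ (4 * K) = (cInt : F) ^ 2 := by
      rw [← hK, pow_succ, hcq, sq]
    have hpj : ((p : F) * JF ^ 2) ^ K = (p : F) := by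
      rcases hJFP with h | h
      · rw [h]; exact key_three K h1 h2 hPP hprodmi hnne ha1 hb1 hcK
      · rw [h]
        exact key_three K h2 h1 (by rw [← hPP]; ring) (by rw [← hprodmi]; ring) hnne hb1 ha1 hcK
    have hg3 := gaussSum_mul_gaussSum_pow_orderOf_sub_one hχFne hψprim
    rw [hordχF, show (4 : ℕ) - 1 = 3 from rfl, ZMod.card] at hg3
    have hgq : g ^ q = gaussSum (χF ^ 3) (ψ.mulShift (q : ZMod p)) := by
      rw [hfrob, hψq, hχFq, hr]
    have hkey : (χF ^ 3) (q : ZMod p) * g ^ q = gaussSum (χF ^ 3) ψ := by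
      rw [hgq, ← hquval]
      exact gaussSum_mulShift (χF ^ 3) ψ qu
    have hcomb : (χF ^ 3) (q : ZMod p) * g ^ (q + 1) = χF (-1) * (p : F) := by
      calc (χF ^ 3) (q : ZMod p) * g ^ (q + 1)
          = g * ((χF ^ 3) (q : ZMod p) * g ^ q) := by rw [pow_succ']; ring
      _ = g * gaussSum (χF ^ 3) ψ := by rw [hkey]
      _ = χF (-1) * (p : F) := hg3
    have hgq4 : g ^ (q + 1) = (p : F) := by rw [hK, pow_mul, hg4, hpj]
    rw [hgq4, MulChar.pow_apply' χF (by norm_num)] at hcomb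
    have hp3 : (χF (q : ZMod p)) ^ 3 = χF (-1) := mul_right_cancel₀ hpF0 hcomb
    have hv1 : χF (-(q : ZMod p)) = 1 := by
      have hsplit : (-(q : ZMod p)) = (-1) * (q : ZMod p) := by ring
      rw [hsplit, map_mul]
      calc χF (-1) * χF (q : ZMod p) = (χF (q : ZMod p)) ^ 4 := by rw [← hp3]; ring
      _ = (χF ^ 4) (q : ZMod p) := (MulChar.pow_apply' χF (by norm_num) _).symm
      _ = 1 := by rw [hχF4, MulChar.one_apply hquIsUnit]
    have hodd : Odd ((q - 1) / 2) := by
      rw [Nat.odd_iff]; omega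
    have hveq : (((-1 : ℤ) ^ ((q - 1) / 2) * (q : ℤ) : ℤ) : ZMod p) = -(q : ZMod p) := by
      rw [Odd.neg_one_pow hodd]
      push_cast; ring
    exact final _ hquIsUnit.neg hv1 hveq
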